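/- Let 0 < μ_min ≤ μ_max and set κ = μ_max/μ_min. For every choice of real parameters γ, η there exists μ ∈ {μ_min, μ_max} and a complex root λ of the quadratic λ² + (γ + η − 2 − ηγ(1−μ)) λ + (γ−1)(η−1) with |λ| ≥ (√κ − 1)/(√κ + 1). In other words, no choice of parameters makes the maximal root modulus over μ ∈ {μ_min, μ_max} smaller than (√κ − 1)/(√κ + 1). -/

import Mathlib

/-- If a product of two complex numbers with positive real part is real, it is positive. -/
lemma apc_aux_pos_of_mul_real (w1 w2 : ℂ) (t : ℝ) (h : w1 * w2 = (t : ℂ))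
    (h1 : 0 < w1.re) (h2 : 0 < w2.re) : 0 < t := by
  have hw1 : w1 ≠ 0 := fun h0 => by simp [h0] at h1
  have hns : 0 < Complex.normSq w1 := Complex.normSq_pos.mpr hw1
  have hw2 : w2 = (t : ℂ) / w1 := by
    rw [eq_div_iff hw1]; linear_combination h
  rw [hw2] at h2
  have hre : ((t : ℂ) / w1).re = t * w1.re / Complex.normSq w1 := by
    rw [Complex.div_re]; simp
  rw [hre] at h2
  have h4 : 0 < t * w1.re := by
    have := mul_pos h2 hns
    rwa [div_mul_cancel₀ _ (ne_of_gt hns)] at this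
  by_contra hcon
  push_neg at hcon
  nlinarith [h4, h1]

/-- Bounds on real coefficients of a monic quadratic whose complex roots are small. -/
lemma apc_aux_root_bounds (b c r : ℝ) (z1 z2 : ℂ)
    (hsum : z1 + z2 = -(b : ℂ)) (hprod : z1 * z2 = (c : ℂ))
    (h1 : ‖z1‖ < r) (h2 : ‖z2‖ < r) :
    c < r ^ 2 ∧ 0 < r ^ 2 + b * r + c ∧ 0 < r ^ 2 - b * r + c := by
  have hcabs : |c| < r ^ 2 := by
    have : ‖z1 * z2‖ < r * r := by
      rw [norm_mul]; exact mul_lt_mul'' h1 h2 (norm_nonneg _) (norm_nonneg _)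
    rw [hprod] at this
    simpa [sq] using this
  have hre1 : |z1.re| < r := lt_of_le_of_lt (Complex.abs_re_le_norm z1) h1
  have hre2 : |z2.re| < r := lt_of_le_of_lt (Complex.abs_re_le_norm z2) h2
  rw [abs_lt] at hre1 hre2
  refine ⟨lt_of_le_of_lt (le_abs_self c) hcabs, ?_, ?_⟩
  · have hp : ((r : ℂ) - z1) * ((r : ℂ) - z2) = ((r ^ 2 + b * r + c : ℝ) : ℂ) := by
      push_cast
      linear_combination (-(r : ℂ)) * hsum + hprod
    exact apc_aux_pos_of_mul_real _ _ _ hp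
      (by simp [Complex.sub_re]; linarith [hre1.2])
      (by simp [Complex.sub_re]; linarith [hre2.2])
  · have hp : ((r : ℂ) + z1) * ((r : ℂ) + z2) = ((r ^ 2 - b * r + c : ℝ) : ℂ) := by
      push_cast
      linear_combination (r : ℂ) * hsum + hprod
    exact apc_aux_pos_of_mul_real _ _ _ hp
      (by simp [Complex.add_re]; linarith [hre1.1])
      (by simp [Complex.add_re]; linarith [hre2.1])

/-- With `0 < μ_min ≤ μ_max` and `κ = μ_max/μ_min`, for every choice of real
parameters `γ, η` there is `μ ∈ {μ_min, μ_max}` and a complex root `λ` of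
`λ² + (γ+η−2−ηγ(1−μ))λ + (γ−1)(η−1)` with `|λ| ≥ (√κ − 1)/(√κ + 1)`. -/
theorem apc_rate_lower_bound
    (μmin μmax : ℝ) (h0 : 0 < μmin) (h1 : μmin ≤ μmax)
    (κ : ℝ) (hκ : κ = μmax / μmin) :
    ∀ γ η : ℝ, ∃ μ ∈ ({μmin, μmax} : Set ℝ), ∃ z : ℂ,
      z ^ 2 + ((γ : ℂ) + (η : ℂ) - 2 - (η : ℂ) * (γ : ℂ) * (1 - (μ : ℂ))) * z
        + ((γ : ℂ) - 1) * ((η : ℂ) - 1) = 0 ∧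
      (Real.sqrt κ - 1) / (Real.sqrt κ + 1) ≤ ‖z‖ := by
  intro γ η
  set q : ℝ := Real.sqrt κ with hqdef
  set r : ℝ := (q - 1) / (q + 1) with hrdef
  by_cases hr : 0 < r
  · -- contradiction branch
    by_contra hcon
    push_neg at hcon
    -- basic facts about q, r, κ
    have hκ1 : 1 ≤ κ := by rw [hκ]; exact (one_le_div h0).mpr h1
    have hq1 : 1 ≤ q := by
      rw [hqdef, show (1:ℝ) = Real.sqrt 1 by simp]
      exact Real.sqrt_le_sqrt hκ1
    have hq1' : 0 < q + 1 := by linarith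
    have hr1 : r < 1 := by
      rw [hrdef, div_lt_one hq1']; linarith
    have hqr : q * (1 - r) = 1 + r := by
      rw [hrdef]; field_simp; ring
    have hq2 : q ^ 2 = κ := Real.sq_sqrt (by linarith : (0:ℝ) ≤ κ)
    have hκμ : μmax = κ * μmin := by
      rw [hκ, div_mul_cancel₀ _ (ne_of_gt h0)]
    -- extract root facts for a given μ
    have key : ∀ μ : ℝ, μ ∈ ({μmin, μmax} : Set ℝ) →
        ((γ - 1) * (η - 1) < r ^ 2 ∧
         0 < r ^ 2 + (γ + η - 2 - η * γ * (1 - μ)) * r + (γ - 1) * (η - 1) ∧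
         0 < r ^ 2 - (γ + η - 2 - η * γ * (1 - μ)) * r + (γ - 1) * (η - 1)) := by
      intro μ hμ
      set B : ℂ := (γ : ℂ) + (η : ℂ) - 2 - (η : ℂ) * (γ : ℂ) * (1 - (μ : ℂ)) with hB
      set C : ℂ := ((γ : ℂ) - 1) * ((η : ℂ) - 1) with hC
      obtain ⟨w, hw⟩ := IsAlgClosed.exists_pow_nat_eq (B ^ 2 - 4 * C) (n := 2) (by norm_num)
      set z1 : ℂ := (-B + w) / 2 with hz1
      set z2 : ℂ := (-B - w) / 2 with hz2
      have e1 : z1 ^ 2 + B * z1 + C = 0 := by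
        rw [hz1]; ring_nf; linear_combination hw / 4
      have e2 : z2 ^ 2 + B * z2 + C = 0 := by
        rw [hz2]; ring_nf; linear_combination hw / 4
      have n1 : ‖z1‖ < r := hcon μ hμ z1 e1
      have n2 : ‖z2‖ < r := hcon μ hμ z2 e2
      have hsum : z1 + z2 = -(((γ + η - 2 - η * γ * (1 - μ) : ℝ)) : ℂ) := by
        rw [hz1, hz2, hB]; push_cast; ring
      have hprod : z1 * z2 = (((γ - 1) * (η - 1) : ℝ) : ℂ) := by
        rw [hz1, hz2]
        have : z1 * z2 = C := by rw [hz1, hz2]; linear_combination (-1/4 : ℂ) * hw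
        rw [← hz1, ← hz2, this, hC]; push_cast; ring
      exact apc_aux_root_bounds _ _ r z1 z2 hsum hprod n1 n2
    obtain ⟨hcmin, hA1, -⟩ := key μmin (by simp)
    obtain ⟨-, -, hB2⟩ := key μmax (by simp)
    -- real arithmetic contradiction
    set c : ℝ := (γ - 1) * (η - 1) with hcdef
    have h1r : 0 < 1 - r := by linarith
    have hrr : r ^ 2 < r := by nlinarith
    have hcr : c < r := lt_trans hcmin hrr
    have hL : (1 - r) * (r - c) < γ * η * μmin * r := by
      rw [hcdef] at hA1 ⊢; nlinarith [hA1]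
    have hU : γ * η * μmax * r < (1 + r) * (r + c) := by
      rw [hcdef] at hB2 ⊢; nlinarith [hB2]
    have hκpos : 0 < κ := by linarith
    have hmain : κ * ((1 - r) * (r - c)) < (1 + r) * (r + c) := by
      have := mul_lt_mul_of_pos_left hL hκpos
      calc κ * ((1 - r) * (r - c)) < κ * (γ * η * μmin * r) := this
        _ = γ * η * μmax * r := by rw [hκμ]; ring
        _ < (1 + r) * (r + c) := hU
    have hq2r : κ * (1 - r) ^ 2 = (1 + r) ^ 2 := by
      calc κ * (1 - r) ^ 2 = (q * (1 - r)) ^ 2 := by rw [← hq2]; ring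
        _ = (1 + r) ^ 2 := by rw [hqr]
    have h4 := mul_lt_mul_of_pos_right hmain h1r
    have h5 : (1 + r) ^ 2 * (r - c) < (1 + r) * (r + c) * (1 - r) := by
      calc (1 + r) ^ 2 * (r - c) = κ * ((1 - r) * (r - c)) * (1 - r) := by
            linear_combination (c - r) * hq2r
        _ < (1 + r) * (r + c) * (1 - r) := h4
    have h6 : 0 < (1 + r) * (r ^ 2 - c) := mul_pos (by linarith) (by linarith)
    nlinarith [h5, h6]
  · -- trivial branch: any root works since r ≤ 0
    refine ⟨μmin, by simp, ?_⟩
    set B : ℂ := (γ : ℂ) + (η : ℂ) - 2 - (η : ℂ) * (γ : ℂ) * (1 - (μmin : ℂ)) with hB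
    set C : ℂ := ((γ : ℂ) - 1) * ((η : ℂ) - 1) with hC
    obtain ⟨w, hw⟩ := IsAlgClosed.exists_pow_nat_eq (B ^ 2 - 4 * C) (n := 2) (by norm_num)
    refine ⟨(-B + w) / 2, ?_, ?_⟩
    · linear_combination hw / 4
    · exact le_trans (le_of_not_gt hr) (norm_nonneg _)
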